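/- For every n ≥ 2, the cut dimension of any weighted undirected graph G on n vertices is at most 2n − 3. -/

import Mathlib

open Finset

/-- Two finite sets overlap if their intersection and both differences are nonempty. -/
def overlap {V : Type*} [DecidableEq V] (X Y : Finset V) : Prop :=
  (X ∩ Y).Nonempty ∧ (X \ Y).Nonempty ∧ (Y \ X).Nonempty

/-- Two shores cross if all four corner sets are nonempty. -/
def crossing {V : Type*} [DecidableEq V] [Fintype V] (X Y : Finset V) : Prop :=
  (X ∩ Y).Nonempty ∧ (X \ Y).Nonempty ∧ (Y \ X).Nonempty ∧ (Xᶜ ∩ Yᶜ).Nonempty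

/-- X is the shore of a cut: nonempty and proper. -/
def isCutShore {V : Type*} [Fintype V] (X : Finset V) : Prop :=
  X.Nonempty ∧ X ≠ Finset.univ

/-- The weight of the cut Δ(X) in the weighted graph with (symmetric) weights w. -/
noncomputable def cutWeight {V : Type*} [DecidableEq V] [Fintype V]
    (w : V → V → ℝ) (X : Finset V) : ℝ :=
  (1/2) * ∑ p : V × V,
    if (p.1 ∈ X ∧ p.2 ∉ X) ∨ (p.2 ∈ X ∧ p.1 ∉ X) then w p.1 p.2 else 0

/-- Δ(X) is a minimum cut. -/
def isMinCut {V : Type*} [DecidableEq V] [Fintype V] (w : V → V → ℝ) (X : Finset V) : Prop :=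
  isCutShore X ∧ ∀ Y : Finset V, isCutShore Y → cutWeight w X ≤ cutWeight w Y

/-- The characteristic vector of the cut Δ(X) among the edges (pairs of positive weight). -/
noncomputable def cutVec {V : Type*} [DecidableEq V] [Fintype V]
    (w : V → V → ℝ) (X : Finset V) : V × V → ℝ :=
  fun p => if (((p.1 ∈ X ∧ p.2 ∉ X) ∨ (p.2 ∈ X ∧ p.1 ∉ X)) ∧ 0 < w p.1 p.2) then 1 else 0

/- ## Auxiliary lemmas -/

lemma not_overlap_iff {V : Type*} [DecidableEq V] (A B : Finset V) :
    ¬ overlap A B ↔ (A ∩ B = ∅ ∨ A ⊆ B ∨ B ⊆ A) := by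
  unfold overlap
  rw [not_and_or, not_and_or]
  simp [Finset.not_nonempty_iff_eq_empty, Finset.sdiff_eq_empty_iff_subset, or_assoc]

lemma overlap_symm {V : Type*} [DecidableEq V] {A B : Finset V} (h : overlap A B) :
    overlap B A := ⟨by rw [Finset.inter_comm]; exact h.1, h.2.2, h.2.1⟩

lemma uncross_overlap {V : Type*} [DecidableEq V] {X L M : Finset V}
    (hXL : overlap X L) (hXM : ¬ overlap X M) (hLM : ¬ overlap L M) :
    ¬ overlap (X ∩ L) M ∧ ¬ overlap (X ∪ L) M := by
  rw [not_overlap_iff] at hXM hLM ⊢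
  rw [not_overlap_iff]
  obtain ⟨h1, h2, h3⟩ := hXL
  constructor
  · rcases hXM with h | h | h
    · left; apply Finset.eq_empty_of_forall_notMem
      intro a ha; simp only [Finset.mem_inter] at ha
      exact Finset.eq_empty_iff_forall_notMem.mp h a (Finset.mem_inter.mpr ⟨ha.1.1, ha.2⟩)
    · right; left; exact (Finset.inter_subset_left).trans h
    · rcases hLM with g | g | g
      · left; apply Finset.eq_empty_of_forall_notMem
        intro a ha; simp only [Finset.mem_inter] at ha
        exact Finset.eq_empty_iff_forall_notMem.mp g a (Finset.mem_inter.mpr ⟨ha.1.2, ha.2⟩)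
      · exfalso; obtain ⟨a, ha⟩ := h3; simp only [Finset.mem_sdiff] at ha
        exact ha.2 (h (g ha.1))
      · right; right; exact Finset.subset_inter h g
  · rcases hXM with h | h | h
    · rcases hLM with g | g | g
      · left; apply Finset.eq_empty_of_forall_notMem
        intro a ha; simp only [Finset.mem_inter, Finset.mem_union] at ha
        rcases ha.1 with hx | hl
        · exact Finset.eq_empty_iff_forall_notMem.mp h a (Finset.mem_inter.mpr ⟨hx, ha.2⟩)
        · exact Finset.eq_empty_iff_forall_notMem.mp g a (Finset.mem_inter.mpr ⟨hl, ha.2⟩)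
      · exfalso; obtain ⟨a, ha⟩ := h1; simp only [Finset.mem_inter] at ha
        exact Finset.eq_empty_iff_forall_notMem.mp h a (Finset.mem_inter.mpr ⟨ha.1, g ha.2⟩)
      · right; right; exact g.trans Finset.subset_union_right
    · rcases hLM with g | g | g
      · exfalso; obtain ⟨a, ha⟩ := h1; simp only [Finset.mem_inter] at ha
        exact Finset.eq_empty_iff_forall_notMem.mp g a (Finset.mem_inter.mpr ⟨ha.2, h ha.1⟩)
      · right; left; exact Finset.union_subset h g
      · right; right; exact g.trans Finset.subset_union_right
    · right; right; exact h.trans Finset.subset_union_left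

/-- A laminar family: pairwise non-overlapping. -/
def Laminar {V : Type*} [DecidableEq V] (ℒ : Finset (Finset V)) : Prop :=
  ∀ A ∈ ℒ, ∀ B ∈ ℒ, A ≠ B → ¬ overlap A B

lemma laminar_aux {V : Type*} [DecidableEq V] :
    ∀ (n : ℕ) (ℒ : Finset (Finset V)) (G : Finset V), ℒ.card ≤ n →
    (∀ L ∈ ℒ, L.Nonempty ∧ L ⊆ G) → Laminar ℒ → G ∉ ℒ → ℒ.card ≤ 2 * G.card - 2 := by
  intro n
  induction n with
  | zero => intro ℒ G hn _ _ _; omega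
  | succ n ih =>
    intro ℒ G hn hmem hlam hG
    rcases eq_or_ne ℒ ∅ with rfl | hne
    · simp
    obtain ⟨M, hMmem, hMmax⟩ := Finset.exists_maximal (Finset.nonempty_iff_ne_empty.mpr hne)
    set ℒ₁ := ℒ.filter (fun L => L ⊆ M) with hL1
    set ℒ₂ := ℒ.filter (fun L => ¬ L ⊆ M) with hL2
    have hsplit : ℒ₁.card + ℒ₂.card = ℒ.card := Finset.card_filter_add_card_filter_not _
    have hM1 : M ∈ ℒ₁ := Finset.mem_filter.mpr ⟨hMmem, Finset.Subset.refl M⟩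
    have hM2 : M ∉ ℒ₂ := fun h => (Finset.mem_filter.mp h).2 (Finset.Subset.refl M)
    have h2sub : ∀ L ∈ ℒ₂, L.Nonempty ∧ L ⊆ G \ M := by
      intro L hL
      obtain ⟨hLmem, hLnsub⟩ := Finset.mem_filter.mp hL
      have hLM : L ≠ M := fun h => hLnsub (h ▸ Finset.Subset.refl M)
      have := (not_overlap_iff L M).mp (hlam L hLmem M hMmem hLM)
      rcases this with h | h | h
      · refine ⟨(hmem L hLmem).1, fun x hx => Finset.mem_sdiff.mpr ⟨(hmem L hLmem).2 hx, ?_⟩⟩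
        intro hxM
        exact Finset.eq_empty_iff_forall_notMem.mp h x (Finset.mem_inter.mpr ⟨hx, hxM⟩)
      · exact absurd h hLnsub
      · exact absurd (lt_of_le_of_ne h (Ne.symm hLM)) (fun hlt => hlt.not_ge (hMmax hLmem hlt.le))
    have hMG : M ≠ G := fun h => hG (h ▸ hMmem)
    have hMcard : M.card < G.card :=
      Finset.card_lt_card (lt_of_le_of_ne (hmem M hMmem).2 hMG)
    have hMpos : 1 ≤ M.card := Finset.card_pos.mpr (hmem M hMmem).1
    have hc1 : (ℒ₁.erase M).card ≤ 2 * M.card - 2 := by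
      apply ih _ M
      · have h1 : (ℒ₁.erase M).card = ℒ₁.card - 1 := Finset.card_erase_of_mem hM1
        have h2 : ℒ₁.card ≤ ℒ.card := Finset.card_le_card (Finset.filter_subset _ _)
        omega
      · intro L hL
        obtain ⟨hLne, hL1'⟩ := Finset.mem_erase.mp hL
        exact ⟨(hmem L (Finset.mem_filter.mp hL1').1).1, (Finset.mem_filter.mp hL1').2⟩
      · intro A hA B hB hAB
        exact hlam A (Finset.mem_filter.mp (Finset.mem_erase.mp hA).2).1
          B (Finset.mem_filter.mp (Finset.mem_erase.mp hB).2).1 hAB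
      · exact fun h => (Finset.mem_erase.mp h).1 rfl
    have hc1' : ℒ₁.card ≤ 2 * M.card - 1 := by
      have := Finset.card_erase_of_mem hM1
      have := Finset.card_pos.mpr ⟨M, hM1⟩
      omega
    have hc2e : (ℒ₂.erase (G \ M)).card ≤ 2 * (G \ M).card - 2 := by
      apply ih _ (G \ M)
      · have h2 : ℒ₂.card ≤ ℒ.card - 1 := by
          have hss : ℒ₂ ⊆ ℒ.erase M := by
            intro L hL
            exact Finset.mem_erase.mpr ⟨fun h => hM2 (h ▸ hL), (Finset.mem_filter.mp hL).1⟩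
          have := Finset.card_le_card hss
          have := Finset.card_erase_of_mem hMmem
          omega
        have := Finset.card_erase_le (s := ℒ₂) (a := G \ M)
        omega
      · intro L hL
        exact h2sub L (Finset.mem_erase.mp hL).2
      · intro A hA B hB hAB
        exact hlam A (Finset.mem_filter.mp (Finset.mem_erase.mp hA).2).1
          B (Finset.mem_filter.mp (Finset.mem_erase.mp hB).2).1 hAB
      · exact fun h => (Finset.mem_erase.mp h).1 rfl
    have hc2 : ℒ₂.card ≤ 2 * (G \ M).card - 1 := by
      by_cases h : G \ M ∈ ℒ₂
      · have h1 := Finset.card_erase_of_mem h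
        have h2 : 1 ≤ (G \ M).card := Finset.card_pos.mpr (h2sub _ h).1
        omega
      · rw [Finset.erase_eq_of_notMem h] at hc2e
        omega
    have hsd : (G \ M).card = G.card - M.card := Finset.card_sdiff_of_subset (hmem M hMmem).2
    omega

lemma laminar_card {V : Type*} [DecidableEq V] (ℒ : Finset (Finset V)) (G : Finset V)
    (hmem : ∀ L ∈ ℒ, L.Nonempty ∧ L ⊆ G) (hlam : Laminar ℒ) :
    ℒ.card ≤ 2 * G.card - 1 := by
  rcases eq_or_ne ℒ ∅ with rfl | hne
  · simp
  obtain ⟨L0, hL0⟩ := Finset.nonempty_iff_ne_empty.mpr hne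
  have hGpos : 1 ≤ G.card :=
    Finset.card_pos.mpr ((hmem L0 hL0).1.mono (hmem L0 hL0).2)
  have haux : (ℒ.erase G).card ≤ 2 * G.card - 2 := by
    apply laminar_aux (ℒ.erase G).card _ G le_rfl
    · exact fun L hL => hmem L (Finset.mem_erase.mp hL).2
    · intro A hA B hB hAB
      exact hlam A (Finset.mem_erase.mp hA).2 B (Finset.mem_erase.mp hB).2 hAB
    · exact fun h => (Finset.mem_erase.mp h).1 rfl
  have := Finset.card_erase_le (s := ℒ) (a := G)
  by_cases h : G ∈ ℒ
  · have := Finset.card_erase_of_mem h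
    omega
  · rw [Finset.erase_eq_of_notMem h] at haux
    omega

lemma submod_eq {V : Type*} [DecidableEq V] [Fintype V] (w : V → V → ℝ) (X Y : Finset V) :
    cutWeight w X + cutWeight w Y = cutWeight w (X ∩ Y) + cutWeight w (X ∪ Y)
      + ∑ p : V × V, (if (p.1 ∈ X \ Y ∧ p.2 ∈ Y \ X) ∨ (p.1 ∈ Y \ X ∧ p.2 ∈ X \ Y)
          then w p.1 p.2 else 0) := by
  unfold cutWeight
  rw [Finset.mul_sum, Finset.mul_sum, Finset.mul_sum, Finset.mul_sum,
    ← Finset.sum_add_distrib, ← Finset.sum_add_distrib, ← Finset.sum_add_distrib]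
  apply Finset.sum_congr rfl
  intro p _
  by_cases h1 : p.1 ∈ X <;> by_cases h2 : p.2 ∈ X <;>
    by_cases h3 : p.1 ∈ Y <;> by_cases h4 : p.2 ∈ Y <;>
    simp [h1, h2, h3, h4, Finset.mem_inter, Finset.mem_union, Finset.mem_sdiff] <;> ring

lemma uncross_mincut {V : Type*} [DecidableEq V] [Fintype V] (w : V → V → ℝ)
    (hnn : ∀ i j, 0 ≤ w i j) {X Y : Finset V}
    (hX : isMinCut w X) (hY : isMinCut w Y)
    (hin : (X ∩ Y).Nonempty) (hun : X ∪ Y ≠ Finset.univ) :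
    isMinCut w (X ∩ Y) ∧ isMinCut w (X ∪ Y) ∧
      cutVec w X + cutVec w Y = cutVec w (X ∩ Y) + cutVec w (X ∪ Y) := by
  have shoreI : isCutShore (X ∩ Y) := by
    refine ⟨hin, fun h => hX.1.2 ?_⟩
    exact Finset.univ_subset_iff.mp (h ▸ Finset.inter_subset_left)
  have shoreU : isCutShore (X ∪ Y) := ⟨hX.1.1.mono Finset.subset_union_left, hun⟩
  have hXY : cutWeight w X = cutWeight w Y := le_antisymm (hX.2 Y hY.1) (hY.2 X hX.1)
  have hi : cutWeight w X ≤ cutWeight w (X ∩ Y) := hX.2 _ shoreI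
  have hu : cutWeight w X ≤ cutWeight w (X ∪ Y) := hX.2 _ shoreU
  have hsub := submod_eq w X Y
  set E := ∑ p : V × V, (if (p.1 ∈ X \ Y ∧ p.2 ∈ Y \ X) ∨ (p.1 ∈ Y \ X ∧ p.2 ∈ X \ Y)
      then w p.1 p.2 else 0) with hE
  have hEnn : 0 ≤ E := Finset.sum_nonneg (fun p _ => by
    split
    · exact hnn _ _
    · exact le_rfl)
  have hwI : cutWeight w (X ∩ Y) = cutWeight w X := by linarith [hXY ▸ hsub]
  have hwU : cutWeight w (X ∪ Y) = cutWeight w X := by linarith [hXY ▸ hsub]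
  have hE0 : E = 0 := by linarith [hXY ▸ hsub]
  have hzero : ∀ p : V × V, (if (p.1 ∈ X \ Y ∧ p.2 ∈ Y \ X) ∨ (p.1 ∈ Y \ X ∧ p.2 ∈ X \ Y)
      then w p.1 p.2 else 0) = 0 := by
    have := (Finset.sum_eq_zero_iff_of_nonneg (fun p _ => by
      split
      · exact hnn _ _
      · exact le_rfl)).mp hE0
    intro p; exact this p (Finset.mem_univ p)
  refine ⟨⟨shoreI, fun Z hZ => hwI ▸ hX.2 Z hZ⟩, ⟨shoreU, fun Z hZ => hwU ▸ hX.2 Z hZ⟩, ?_⟩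
  funext p
  by_cases hw : 0 < w p.1 p.2
  · have hep : ¬ ((p.1 ∈ X \ Y ∧ p.2 ∈ Y \ X) ∨ (p.1 ∈ Y \ X ∧ p.2 ∈ X \ Y)) := by
      intro he
      have := hzero p
      rw [if_pos he] at this
      linarith
    simp only [Pi.add_apply, cutVec]
    by_cases h1 : p.1 ∈ X <;> by_cases h2 : p.2 ∈ X <;>
      by_cases h3 : p.1 ∈ Y <;> by_cases h4 : p.2 ∈ Y <;>
      simp_all [Finset.mem_inter, Finset.mem_union, Finset.mem_sdiff]
  · simp only [Pi.add_apply, cutVec]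
    simp [hw]

lemma cutWeight_compl {V : Type*} [DecidableEq V] [Fintype V] (w : V → V → ℝ) (X : Finset V) :
    cutWeight w Xᶜ = cutWeight w X := by
  unfold cutWeight
  congr 1
  apply Finset.sum_congr rfl
  intro p _
  apply if_congr _ rfl rfl
  simp only [Finset.mem_compl]
  tauto

lemma cutVec_compl {V : Type*} [DecidableEq V] [Fintype V] (w : V → V → ℝ) (X : Finset V) :
    cutVec w Xᶜ = cutVec w X := by
  funext p
  unfold cutVec
  apply if_congr _ rfl rfl
  simp only [Finset.mem_compl]
  tauto

lemma isMinCut_compl {V : Type*} [DecidableEq V] [Fintype V] {w : V → V → ℝ} {X : Finset V}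
    (hX : isMinCut w X) : isMinCut w Xᶜ := by
  constructor
  · constructor
    · rw [Finset.nonempty_iff_ne_empty]
      intro h
      exact hX.1.2 (by simpa using congrArg compl h)
    · intro h
      have : X = ∅ := by simpa using congrArg compl h
      exact Finset.nonempty_iff_ne_empty.mp hX.1.1 this
  · intro Z hZ
    rw [cutWeight_compl]
    exact hX.2 Z hZ

/-- Main upper bound: the cut dimension of any weighted graph on `n ≥ 2` vertices is at
most `2n - 3`. -/
theorem stmt11 {V : Type*} [DecidableEq V] [Fintype V] (n : ℕ) (hn : 2 ≤ n)
    (hcard : Fintype.card V = n)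
    (w : V → V → ℝ) (hsym : ∀ i j, w i j = w j i) (hnn : ∀ i j, 0 ≤ w i j) :
    Module.finrank ℝ (Submodule.span ℝ
      {v : V × V → ℝ | ∃ X : Finset V, isMinCut w X ∧ v = cutVec w X}) ≤ 2 * n - 3 := by
  classical
  have hVpos : 0 < Fintype.card V := by omega
  obtain ⟨r⟩ : Nonempty V := Fintype.card_pos_iff.mp hVpos
  set 𝒩 : Finset (Finset V) := Finset.univ.filter (fun X => isMinCut w X ∧ r ∉ X) with h𝒩
  have hcand : ((𝒩.powerset).filter (fun ℒ => Laminar ℒ)).Nonempty := by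
    refine ⟨∅, Finset.mem_filter.mpr ⟨Finset.mem_powerset.mpr (Finset.empty_subset _), ?_⟩⟩
    intro A hA
    simp at hA
  obtain ⟨ℒ, hℒmem, hℒmax⟩ := Finset.exists_max_image _ Finset.card hcand
  have hℒsub : ℒ ⊆ 𝒩 := Finset.mem_powerset.mp (Finset.mem_filter.mp hℒmem).1
  have hℒlam : Laminar ℒ := (Finset.mem_filter.mp hℒmem).2
  have hℒprop : ∀ L ∈ ℒ, isMinCut w L ∧ r ∉ L := by
    intro L hL
    exact (Finset.mem_filter.mp (hℒsub hL)).2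
  set p : Submodule ℝ (V × V → ℝ) :=
    Submodule.span ℝ (↑(ℒ.image (cutVec w)) : Set (V × V → ℝ)) with hp
  -- maximality of ℒ
  have hmax : ∀ X ∈ 𝒩, (∀ L ∈ ℒ, ¬ overlap X L) → X ∈ ℒ := by
    intro X hX hno
    by_contra hXne
    have hins : insert X ℒ ∈ (𝒩.powerset).filter (fun ℒ => Laminar ℒ) := by
      refine Finset.mem_filter.mpr ⟨Finset.mem_powerset.mpr ?_, ?_⟩
      · exact Finset.insert_subset hX hℒsub
      · intro A hA B hB hAB
        rcases Finset.mem_insert.mp hA with rfl | hA' <;>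
          rcases Finset.mem_insert.mp hB with rfl | hB'
        · exact absurd rfl hAB
        · exact hno B hB'
        · exact fun hov => hno A hA' (overlap_symm hov)
        · exact hℒlam A hA' B hB' hAB
    have hcard1 : (insert X ℒ).card = ℒ.card + 1 := Finset.card_insert_of_notMem hXne
    have := hℒmax _ hins
    omega
  -- key uncrossing induction
  have key : ∀ (k : ℕ) (X : Finset V), isMinCut w X → r ∉ X →
      (ℒ.filter (fun L => overlap X L)).card ≤ k → cutVec w X ∈ p := by
    intro k
    induction k with
    | zero =>
      intro X hX hr h0
      have hno : ∀ L ∈ ℒ, ¬ overlap X L := by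
        intro L hL hov
        have : L ∈ ℒ.filter (fun L => overlap X L) := Finset.mem_filter.mpr ⟨hL, hov⟩
        have := Finset.card_pos.mpr ⟨L, this⟩
        omega
      have hXℒ : X ∈ ℒ :=
        hmax X (Finset.mem_filter.mpr ⟨Finset.mem_univ X, hX, hr⟩) hno
      exact Submodule.subset_span (Finset.mem_coe.mpr (Finset.mem_image_of_mem _ hXℒ))
    | succ k ih =>
      intro X hX hr hk
      by_cases hfe : (ℒ.filter (fun L => overlap X L)).Nonempty
      · obtain ⟨L, hLf⟩ := hfe
        obtain ⟨hL, hov⟩ := Finset.mem_filter.mp hLf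
        obtain ⟨hLmc, hLr⟩ := hℒprop L hL
        have hin : (X ∩ L).Nonempty := hov.1
        have hun : X ∪ L ≠ Finset.univ := by
          intro h
          have : r ∈ X ∪ L := h ▸ Finset.mem_univ r
          rcases Finset.mem_union.mp this with h' | h'
          · exact hr h'
          · exact hLr h'
        obtain ⟨hmcI, hmcU, hvec⟩ := uncross_mincut w hnn hX hLmc hin hun
        have hrI : r ∉ X ∩ L := fun h => hr (Finset.mem_inter.mp h).1
        have hrU : r ∉ X ∪ L := fun h => by
          rcases Finset.mem_union.mp h with h' | h'
          · exact hr h'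
          · exact hLr h'
        -- counting
        have hcount : ∀ A : Finset V, ¬ overlap A L →
            (∀ M ∈ ℒ, ¬ overlap X M → ¬ overlap L M → ¬ overlap A M) →
            (ℒ.filter (fun M => overlap A M)).card ≤ k := by
          intro A hAL hAprop
          have hsub : ℒ.filter (fun M => overlap A M) ⊆
              (ℒ.filter (fun M => overlap X M)).erase L := by
            intro M hM
            obtain ⟨hMℒ, hovA⟩ := Finset.mem_filter.mp hM
            have hML : M ≠ L := fun h => hAL (h ▸ hovA)
            refine Finset.mem_erase.mpr ⟨hML, Finset.mem_filter.mpr ⟨hMℒ, ?_⟩⟩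
            by_contra hnov
            exact hAprop M hMℒ hnov (hℒlam L hL M hMℒ (Ne.symm hML)) hovA
          have h1 := Finset.card_le_card hsub
          have h2 := Finset.card_erase_of_mem hLf
          omega
        have hkI : (ℒ.filter (fun M => overlap (X ∩ L) M)).card ≤ k := by
          apply hcount
          · rw [not_overlap_iff]
            right; left; exact Finset.inter_subset_right
          · intro M _ hXM hLM
            exact (uncross_overlap hov hXM hLM).1
        have hkU : (ℒ.filter (fun M => overlap (X ∪ L) M)).card ≤ k := by
          apply hcount
          · rw [not_overlap_iff]
            right; right; exact Finset.subset_union_right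
          · intro M _ hXM hLM
            exact (uncross_overlap hov hXM hLM).2
        have ihI := ih (X ∩ L) hmcI hrI hkI
        have ihU := ih (X ∪ L) hmcU hrU hkU
        have hLp : cutVec w L ∈ p :=
          Submodule.subset_span (Finset.mem_coe.mpr (Finset.mem_image_of_mem _ hL))
        have hXeq : cutVec w X = cutVec w (X ∩ L) + cutVec w (X ∪ L) - cutVec w L := by
          rw [eq_sub_iff_add_eq]
          exact hvec
        rw [hXeq]
        exact sub_mem (add_mem ihI ihU) hLp
      · rw [Finset.not_nonempty_iff_eq_empty] at hfe
        exact ih X hX hr (by simp [hfe])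
  -- span inclusion
  have hspan : Submodule.span ℝ
      {v : V × V → ℝ | ∃ X : Finset V, isMinCut w X ∧ v = cutVec w X} ≤ p := by
    rw [Submodule.span_le]
    rintro v ⟨X, hX, rfl⟩
    by_cases hr : r ∈ X
    · rw [← cutVec_compl w X]
      exact key _ Xᶜ (isMinCut_compl hX) (by simp [hr]) le_rfl
    · exact key _ X hX hr le_rfl
  have h1 : Module.finrank ℝ (Submodule.span ℝ
      {v : V × V → ℝ | ∃ X : Finset V, isMinCut w X ∧ v = cutVec w X}) ≤ Module.finrank ℝ p :=
    Submodule.finrank_mono hspan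
  have h2 : Module.finrank ℝ p ≤ (ℒ.image (cutVec w)).card := finrank_span_finset_le_card _
  have h3 : (ℒ.image (cutVec w)).card ≤ ℒ.card := Finset.card_image_le
  have h4 : ℒ.card ≤ 2 * (Finset.univ.erase r).card - 1 := by
    apply laminar_card ℒ _ _ hℒlam
    intro L hL
    obtain ⟨hLmc, hLr⟩ := hℒprop L hL
    refine ⟨hLmc.1.1, fun x hx => Finset.mem_erase.mpr ⟨?_, Finset.mem_univ x⟩⟩
    rintro rfl
    exact hLr hx
  have h5 : (Finset.univ.erase r).card = n - 1 := by
    rw [Finset.card_erase_of_mem (Finset.mem_univ r), Finset.card_univ, hcard]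
  omega
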